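/- Consider c : ℝ^d → ℝ defined by c(z) = ((|z| − 1)₊)², where (s)₊ = max(s,0) and |·| is the Euclidean norm. Then c is convex, and for every p ∈ ℝ^d the face ∂c*(p) is a singleton unless p = 0, in which case ∂c*(0) is the closed Euclidean unit ball B̄(0,1). -/

import Mathlib

open scoped RealInnerProductSpace


/-- The Legendre–Fenchel conjugate of a real-valued function on `ℝ^d`, valued in `EReal`. -/
noncomputable def fenchelConj {d : ℕ} (c : EuclideanSpace ℝ (Fin d) → ℝ)
    (p : EuclideanSpace ℝ (Fin d)) : EReal :=
  ⨆ z, (((inner ℝ p z : ℝ) - c z : ℝ) : EReal)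

/-- The face `∂c*(p)` of `c`. -/
noncomputable def face {d : ℕ} (c : EuclideanSpace ℝ (Fin d) → ℝ)
    (p : EuclideanSpace ℝ (Fin d)) : Set (EuclideanSpace ℝ (Fin d)) :=
  {z | ∀ q, fenchelConj c p + ((inner ℝ z (q - p) : ℝ) : EReal) ≤ fenchelConj c q}

lemma aux_real_bound (t r : ℝ) (ht : 0 ≤ t) (hr : 0 ≤ r) :
    t * r - (max (r - 1) 0) ^ 2 ≤ t + t ^ 2 / 4 := by
  rcases le_total r 1 with h | h
  · rw [max_eq_right (by linarith)]
    nlinarith [sq_nonneg t]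
  · rw [max_eq_left (by linarith)]
    nlinarith [sq_nonneg (r - 1 - t / 2)]

lemma conj_eq {d : ℕ} (c : EuclideanSpace ℝ (Fin d) → ℝ)
    (hc : ∀ z, c z = (max (‖z‖ - 1) 0) ^ 2) (p : EuclideanSpace ℝ (Fin d)) :
    fenchelConj c p = ((‖p‖ + ‖p‖ ^ 2 / 4 : ℝ) : EReal) := by
  apply le_antisymm
  · apply iSup_le
    intro z
    rw [EReal.coe_le_coe_iff]
    have h1 : ⟪p, z⟫ ≤ ‖p‖ * ‖z‖ := real_inner_le_norm p z
    have h2 := aux_real_bound ‖p‖ ‖z‖ (norm_nonneg p) (norm_nonneg z)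
    rw [hc z]; linarith
  · rcases eq_or_ne p 0 with rfl | hp
    · have := le_iSup (fun z => (((inner ℝ (0 : EuclideanSpace ℝ (Fin d)) z : ℝ) - c z : ℝ) : EReal)) (0 : EuclideanSpace ℝ (Fin d))
      refine le_trans (le_of_eq ?_) this
      rw [hc 0]
      norm_num
    · set z₀ : EuclideanSpace ℝ (Fin d) := (1 / ‖p‖ + 1 / 2) • p with hz₀
      have hpn : (0:ℝ) < ‖p‖ := norm_pos_iff.mpr hp
      have hnz : ‖z₀‖ = 1 + ‖p‖ / 2 := by
        rw [hz₀, norm_smul, Real.norm_eq_abs, abs_of_pos (by positivity)]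
        field_simp
      have hiz : ⟪p, z₀⟫ = ‖p‖ + ‖p‖ ^ 2 / 2 := by
        rw [hz₀, real_inner_smul_right, real_inner_self_eq_norm_sq]
        field_simp
      have := le_iSup (fun z => (((inner ℝ p z : ℝ) - c z : ℝ) : EReal)) z₀
      refine le_trans (le_of_eq ?_) this
      show (((‖p‖ + ‖p‖ ^ 2 / 4 : ℝ)) : EReal) = (((⟪p, z₀⟫ - c z₀ : ℝ)) : EReal)
      norm_cast
      rw [hc z₀, hnz, hiz]
      rw [show max (1 + ‖p‖/2 - 1) 0 = ‖p‖/2 by rw [max_eq_left (by linarith)]; ring]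
      ring

lemma face_iff {d : ℕ} (c : EuclideanSpace ℝ (Fin d) → ℝ)
    (hc : ∀ z, c z = (max (‖z‖ - 1) 0) ^ 2) (p z : EuclideanSpace ℝ (Fin d)) :
    z ∈ face c p ↔
      ∀ q, ‖p‖ + ‖p‖ ^ 2 / 4 + ⟪z, q - p⟫ ≤ ‖q‖ + ‖q‖ ^ 2 / 4 := by
  unfold face
  simp only [Set.mem_setOf_eq, conj_eq c hc]
  constructor
  · intro h q
    have := h q
    rw [← EReal.coe_add, EReal.coe_le_coe_iff] at this
    linarith
  · intro h q
    rw [← EReal.coe_add, EReal.coe_le_coe_iff]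
    linarith [h q]

set_option maxHeartbeats 1000000 in
lemma face_ne {d : ℕ} (c : EuclideanSpace ℝ (Fin d) → ℝ)
    (hc : ∀ z, c z = (max (‖z‖ - 1) 0) ^ 2) (p : EuclideanSpace ℝ (Fin d)) (hp : p ≠ 0) :
    face c p = {(1 / ‖p‖ + 1 / 2) • p} := by
  have hpn : (0:ℝ) < ‖p‖ := norm_pos_iff.mpr hp
  set s := ‖p‖ with hs
  set z₀ : EuclideanSpace ℝ (Fin d) := (1 / s + 1 / 2) • p with hz₀
  ext z
  rw [face_iff c hc, Set.mem_singleton_iff]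
  constructor
  · intro h
    set v := z - z₀ with hv
    by_contra hne
    have hvne : v ≠ 0 := sub_ne_zero.mpr hne
    have hvn : (0:ℝ) < ‖v‖ := norm_pos_iff.mpr hvne
    set I := ⟪p, v⟫ with hI
    -- choose t
    set t : ℝ := min (s ^ 2 / (2 * (|I| + 1))) (1 / (2 * (1 / s + 1 / 4))) with hT
    have ht1 : t ≤ s ^ 2 / (2 * (|I| + 1)) := min_le_left _ _
    have ht2 : t ≤ 1 / (2 * (1 / s + 1 / 4)) := min_le_right _ _
    have habs : 0 ≤ |I| := abs_nonneg _
    have htpos : 0 < t := lt_min (by positivity) (by positivity)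
    have htI : t * |I| ≤ s ^ 2 / 2 := by
      have h0 : (0:ℝ) < 2 * (|I| + 1) := by positivity
      have h1 : t * (|I| + 1) ≤ s ^ 2 / 2 := by
        calc t * (|I| + 1) ≤ (s ^ 2 / (2 * (|I| + 1))) * (|I| + 1) :=
              mul_le_mul_of_nonneg_right ht1 (by positivity)
          _ = s ^ 2 / 2 := by field_simp
      nlinarith
    have hIs : I ≤ |I| := le_abs_self I
    have hIs' : -|I| ≤ I := neg_abs_le I
    -- bound on ‖p + t • v‖
    set B : ℝ := (s ^ 2 + t * I + t ^ 2 * ‖v‖ ^ 2) / s with hB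
    have hnum : s ^ 2 / 2 ≤ s ^ 2 + t * I + t ^ 2 * ‖v‖ ^ 2 := by
      nlinarith [sq_nonneg t, sq_nonneg ‖v‖, mul_nonneg (sq_nonneg t) (sq_nonneg ‖v‖),
        mul_le_mul_of_nonneg_left hIs' htpos.le]
    have hBpos : 0 < B := by
      apply div_pos _ hpn
      nlinarith
    have hsq : ‖p + t • v‖ ^ 2 = s ^ 2 + 2 * t * I + t ^ 2 * ‖v‖ ^ 2 := by
      rw [norm_add_sq_real, real_inner_smul_right, norm_smul, Real.norm_eq_abs,
        abs_of_pos htpos, ← hI, ← hs]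
      ring
    have hN : 0 ≤ (s ^ 2 + t * I + t ^ 2 * ‖v‖ ^ 2) ^ 2
        - (s ^ 2 + 2 * t * I + t ^ 2 * ‖v‖ ^ 2) * s ^ 2 := by
      have key : (s ^ 2 + t * I + t ^ 2 * ‖v‖ ^ 2) ^ 2
          - (s ^ 2 + 2 * t * I + t ^ 2 * ‖v‖ ^ 2) * s ^ 2
          = t ^ 2 * (I ^ 2 + ‖v‖ ^ 2 * (s ^ 2 + 2 * t * I) + t ^ 2 * ‖v‖ ^ 4) := by ring
      rw [key]
      have h1 : 0 ≤ s ^ 2 + 2 * t * I := by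
        nlinarith [mul_le_mul_of_nonneg_left hIs' htpos.le]
      positivity
    have hB2 : ‖p + t • v‖ ^ 2 ≤ B ^ 2 := by
      rw [hsq, hB, div_pow]
      rw [le_div_iff₀ (pow_pos hpn 2)]
      linarith [hN]
    have hBle : ‖p + t • v‖ ≤ B := by
      nlinarith [hB2, hBpos, norm_nonneg (p + t • v)]
    -- apply the hypothesis at q = p + t • v
    have hq := h (p + t • v)
    rw [show p + t • v - p = t • v by abel] at hq
    have hzv : ⟪z, t • v⟫ = t * (⟪z₀, v⟫ + ‖v‖ ^ 2) := by
      rw [real_inner_smul_right]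
      congr 1
      rw [show z = z₀ + v by rw [hv]; abel, inner_add_left, real_inner_self_eq_norm_sq]
    have hz₀v : ⟪z₀, v⟫ = (1 / s + 1 / 2) * I := by
      rw [hz₀, real_inner_smul_left, hI]
    have hgq : ‖p + t • v‖ + ‖p + t • v‖ ^ 2 / 4
        ≤ B + (s ^ 2 + 2 * t * I + t ^ 2 * ‖v‖ ^ 2) / 4 := by
      rw [← hsq]; linarith
    rw [hzv, hz₀v] at hq
    have key : s + s ^ 2 / 4 + t * ((1 / s + 1 / 2) * I + ‖v‖ ^ 2)
        ≤ B + (s ^ 2 + 2 * t * I + t ^ 2 * ‖v‖ ^ 2) / 4 := le_trans hq hgq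
    have expand : B + (s ^ 2 + 2 * t * I + t ^ 2 * ‖v‖ ^ 2) / 4
        = s + s ^ 2 / 4 + t * ((1 / s + 1 / 2) * I) + t ^ 2 * ‖v‖ ^ 2 * (1 / s + 1 / 4) := by
      rw [hB]; field_simp; ring
    rw [expand] at key
    have hfin : t * ‖v‖ ^ 2 ≤ t ^ 2 * ‖v‖ ^ 2 * (1 / s + 1 / 4) := by linarith
    have ht2' : t * (1 / s + 1 / 4) ≤ 1 / 2 := by
      have hc2 : (0:ℝ) < 1 / s + 1 / 4 := by positivity
      calc t * (1 / s + 1 / 4) ≤ (1 / (2 * (1 / s + 1 / 4))) * (1 / s + 1 / 4) :=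
            mul_le_mul_of_nonneg_right ht2 hc2.le
        _ = 1 / 2 := by field_simp
    nlinarith [mul_pos htpos (mul_pos hvn hvn)]
  · intro h q
    subst h
    have h1 : ⟪(1 / s + 1 / 2) • p, q - p⟫ = (1 / s + 1 / 2) * (⟪p, q⟫ - s ^ 2) := by
      rw [real_inner_smul_left, inner_sub_right, real_inner_self_eq_norm_sq]
    rw [h1]
    have h2 : ⟪p, q⟫ ≤ s * ‖q‖ := real_inner_le_norm p q
    have h3 : (1 / s + 1 / 2) * (⟪p, q⟫ - s ^ 2) ≤ (1 / s + 1 / 2) * (s * ‖q‖ - s ^ 2) := by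
      apply mul_le_mul_of_nonneg_left (by linarith) (by positivity)
    have h4 : (1 / s + 1 / 2) * (s * ‖q‖ - s ^ 2) = ‖q‖ + s * ‖q‖ / 2 - s - s ^ 2 / 2 := by
      field_simp
      ring
    nlinarith [sq_nonneg (s - ‖q‖)]

/-- `c(z) = ((|z| − 1)₊)²` is convex, its faces `∂c*(p)` are singletons for
`p ≠ 0`, and `∂c*(0)` is the closed Euclidean unit ball. -/
theorem stmt16 {d : ℕ} (c : EuclideanSpace ℝ (Fin d) → ℝ)
    (hc : ∀ z, c z = (max (‖z‖ - 1) 0) ^ 2) :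
    ConvexOn ℝ Set.univ c ∧
      (∀ p : EuclideanSpace ℝ (Fin d), p ≠ 0 → ∃ z, face c p = {z}) ∧
      face c 0 = Metric.closedBall (0 : EuclideanSpace ℝ (Fin d)) 1 := by
  refine ⟨⟨convex_univ, ?_⟩, fun p hp => ⟨_, face_ne c hc p hp⟩, ?_⟩
  · intro x _ y _ a b ha hb hab
    rw [hc, hc, hc]
    set u := max (‖x‖ - 1) 0 with hu
    set w := max (‖y‖ - 1) 0 with hw
    have hu0 : 0 ≤ u := le_max_right _ _
    have hw0 : 0 ≤ w := le_max_right _ _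
    have hux : ‖x‖ - 1 ≤ u := le_max_left _ _
    have hwy : ‖y‖ - 1 ≤ w := le_max_left _ _
    have hnorm : ‖a • x + b • y‖ ≤ a * ‖x‖ + b * ‖y‖ := by
      calc ‖a • x + b • y‖ ≤ ‖a • x‖ + ‖b • y‖ := norm_add_le _ _
        _ = a * ‖x‖ + b * ‖y‖ := by
          rw [norm_smul, norm_smul, Real.norm_eq_abs, Real.norm_eq_abs,
            abs_of_nonneg ha, abs_of_nonneg hb]
    have hm : max (‖a • x + b • y‖ - 1) 0 ≤ a * u + b * w := by
      apply max_le _ (by positivity)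
      nlinarith
    have hm0 : 0 ≤ max (‖a • x + b • y‖ - 1) 0 := le_max_right _ _
    have step1 : (max (‖a • x + b • y‖ - 1) 0) ^ 2 ≤ (a * u + b * w) ^ 2 := by
      apply pow_le_pow_left₀ hm0 hm
    have step2 : (a * u + b * w) ^ 2 ≤ a * u ^ 2 + b * w ^ 2 := by
      nlinarith [sq_nonneg (u - w), mul_nonneg ha hb]
    calc (max (‖a • x + b • y‖ - 1) 0) ^ 2 ≤ (a * u + b * w) ^ 2 := step1
      _ ≤ a * u ^ 2 + b * w ^ 2 := step2
      _ = a • u ^ 2 + b • w ^ 2 := by simp [smul_eq_mul]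
  · ext z
    rw [face_iff c hc, Metric.mem_closedBall, dist_zero_right]
    simp only [norm_zero, sub_zero]
    constructor
    · intro h
      by_contra hz
      push_neg at hz
      have hzn : (0:ℝ) < ‖z‖ := by linarith
      set n := ‖z‖ with hn
      set t : ℝ := 2 * (n - 1) / n with ht
      have htpos : 0 < t := div_pos (by linarith) hzn
      have hq := h (t • z)
      rw [real_inner_smul_right, real_inner_self_eq_norm_sq, norm_smul,
        Real.norm_eq_abs, abs_of_pos htpos, ← hn] at hq
      have htn : t * n = 2 * (n - 1) := by rw [ht, div_mul_cancel₀ _ hzn.ne']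
      nlinarith [sq_nonneg (n - 1)]
    · intro h q
      have h1 : ⟪z, q⟫ ≤ ‖z‖ * ‖q‖ := real_inner_le_norm z q
      have h2 : ‖z‖ * ‖q‖ ≤ 1 * ‖q‖ := mul_le_mul_of_nonneg_right h (norm_nonneg q)
      nlinarith [norm_nonneg q, sq_nonneg ‖q‖]
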